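/- Let F : ℝⁿ → ℝⁿ be twice continuously differentiable, and define G : ℝⁿ × ℝⁿ → ℝⁿ × ℝⁿ by G(x,v) = (F(v), (J(F)(v))ᵀ x). Then for all (x,v) ∈ ℝⁿ × ℝⁿ, the Jacobian determinant of G satisfies j(G)(x,v) = (−1)ⁿ (j(F)(v))². In particular, if F is nonsingular then G is nonsingular. -/

import Mathlib

open Matrix

noncomputable section

/-- The Jacobian matrix J(F)(p) of a map F between real coordinate spaces. -/
def Jmat {ι κ : Type*} [Fintype ι] [Fintype κ] [DecidableEq ι]
    (F : (ι → ℝ) → (κ → ℝ)) (p : ι → ℝ) : Matrix κ ι ℝ :=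
  LinearMap.toMatrix' (fderiv ℝ F p : (ι → ℝ) →ₗ[ℝ] (κ → ℝ))

/-- The Jacobian determinant j(F)(p) = det J(F)(p) of a map at a point. -/
def jdet {E : Type*} [NormedAddCommGroup E] [NormedSpace ℝ E] (F : E → E) (p : E) : ℝ :=
  LinearMap.det (fderiv ℝ F p : E →ₗ[ℝ] E)

lemma det_fromBlocks_zero_tl {m R : Type*} [DecidableEq m] [Fintype m] [CommRing R]
    (B C D : Matrix m m R) :
    (Matrix.fromBlocks 0 B C D).det = (-1 : R) ^ (Fintype.card m) * B.det * C.det := by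
  have h1 : Matrix.fromBlocks (0 : Matrix m m R) B C D =
      Matrix.fromBlocks B 0 D C * (Matrix.fromBlocks 0 1 1 0 : Matrix (m ⊕ m) (m ⊕ m) R) := by
    simp [Matrix.fromBlocks_multiply]
  have h2 : (Matrix.fromBlocks (0 : Matrix m m R) 1 1 0) =
      (Matrix.fromBlocks 1 1 0 1 : Matrix (m ⊕ m) (m ⊕ m) R) *
        (Matrix.fromBlocks 1 0 (-1) 1 : Matrix (m ⊕ m) (m ⊕ m) R) *
        (Matrix.fromBlocks 1 1 0 1 : Matrix (m ⊕ m) (m ⊕ m) R) *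
        (Matrix.fromBlocks (-1) 0 0 1 : Matrix (m ⊕ m) (m ⊕ m) R) := by
    simp [Matrix.fromBlocks_multiply]
  rw [h1, Matrix.det_mul, h2]
  rw [Matrix.det_mul, Matrix.det_mul, Matrix.det_mul]
  simp [Matrix.det_neg]
  ring

def beta (n : ℕ) : ((Fin n → ℝ) →L[ℝ] (Fin n → ℝ)) →L[ℝ] ((Fin n → ℝ) →L[ℝ] (Fin n → ℝ)) :=
  LinearMap.toContinuousLinearMap
  { toFun := fun L => LinearMap.toContinuousLinearMap
      (Matrix.toLin' (LinearMap.toMatrix' (L : (Fin n → ℝ) →ₗ[ℝ] (Fin n → ℝ)))ᵀ)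
    map_add' := by
      intro L L'
      ext x i
      simp [Matrix.toLin'_apply, Matrix.transpose_add, Matrix.add_mulVec]
    map_smul' := by
      intro c L
      ext x i
      simp [Matrix.toLin'_apply, Matrix.transpose_smul, Matrix.smul_mulVec] }
lemma beta_apply {n : ℕ} (L : (Fin n → ℝ) →L[ℝ] (Fin n → ℝ)) (x : Fin n → ℝ) :
    beta n L x = (LinearMap.toMatrix' (L : (Fin n → ℝ) →ₗ[ℝ] (Fin n → ℝ)))ᵀ.mulVec x := by
  simp [beta, Matrix.toLin'_apply]

/-- for F : ℝⁿ → ℝⁿ twice continuously differentiable, the map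
G(x,v) = (F(v), (J(F)(v))ᵀ x) satisfies j(G)(x,v) = (−1)ⁿ (j(F)(v))²; in
particular if F is nonsingular then so is G.
(ℝⁿ × ℝⁿ is modelled as Fin n ⊕ Fin n → ℝ, with x = w ∘ Sum.inl and
v = w ∘ Sum.inr.) -/
theorem stmt12 (n : ℕ) (F : (Fin n → ℝ) → (Fin n → ℝ)) (hF : ContDiff ℝ 2 F)
    (G : (Fin n ⊕ Fin n → ℝ) → (Fin n ⊕ Fin n → ℝ))
    (hG : ∀ w, G w = Sum.elim
      (F (w ∘ Sum.inr))
      ((Jmat F (w ∘ Sum.inr))ᵀ.mulVec (w ∘ Sum.inl))) :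
    (∀ w, jdet G w = (-1 : ℝ) ^ n * (jdet F (w ∘ Sum.inr)) ^ 2) ∧
    ((∀ x, jdet F x ≠ 0) → ∀ w, jdet G w ≠ 0) := by
  have key : ∀ w, jdet G w = (-1 : ℝ) ^ n * (jdet F (w ∘ Sum.inr)) ^ 2 := by
    intro w0
    classical
    have hFd : Differentiable ℝ F := hF.differentiable two_ne_zero
    have hfd : Differentiable ℝ (fderiv ℝ F) :=
      (hF.fderiv_right (m := 1) (by norm_num)).differentiable one_ne_zero
    let e : ((Fin n ⊕ Fin n) → ℝ) ≃L[ℝ] (Fin n → ℝ) × (Fin n → ℝ) :=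
      (LinearEquiv.sumArrowLequivProdArrow (Fin n) (Fin n) ℝ ℝ).toContinuousLinearEquiv
    set x0 : Fin n → ℝ := w0 ∘ Sum.inl with hx0
    set v0 : Fin n → ℝ := w0 ∘ Sum.inr with hv0
    set J : (Fin n → ℝ) →L[ℝ] (Fin n → ℝ) := fderiv ℝ F v0 with hJdef
    set D2 : (Fin n → ℝ) →L[ℝ] ((Fin n → ℝ) →L[ℝ] (Fin n → ℝ)) :=
      fderiv ℝ (fderiv ℝ F) v0 with hD2def
    let H : (Fin n → ℝ) × (Fin n → ℝ) → (Fin n → ℝ) × (Fin n → ℝ) :=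
      fun p => (F p.2, beta n (fderiv ℝ F p.2) p.1)
    have hbb : IsBoundedBilinearMap ℝ
        (fun p : (((Fin n → ℝ) →L[ℝ] (Fin n → ℝ)) × (Fin n → ℝ)) => p.1 p.2) :=
      isBoundedBilinearMap_apply
    let BB : (((Fin n → ℝ) →L[ℝ] (Fin n → ℝ)) × (Fin n → ℝ)) →L[ℝ] (Fin n → ℝ) :=
      hbb.deriv (beta n J, x0)
    let sndL := ContinuousLinearMap.snd ℝ (Fin n → ℝ) (Fin n → ℝ)
    let fstL := ContinuousLinearMap.fst ℝ (Fin n → ℝ) (Fin n → ℝ)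
    let LH : ((Fin n → ℝ) × (Fin n → ℝ)) →L[ℝ] ((Fin n → ℝ) × (Fin n → ℝ)) :=
      (J.comp sndL).prod (BB.comp ((((beta n).comp (D2.comp sndL))).prod fstL))
    have hew0 : e w0 = (x0, v0) := rfl
    -- derivative of H at (x0, v0)
    have hH : HasFDerivAt H LH (x0, v0) := by
      apply HasFDerivAt.prodMk
      · exact ((hFd v0).hasFDerivAt).comp (x0, v0) (hasFDerivAt_snd)
      · have hg : HasFDerivAt
            (fun p : (Fin n → ℝ) × (Fin n → ℝ) => (beta n (fderiv ℝ F p.2), p.1))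
            ((((beta n).comp (D2.comp sndL))).prod fstL) (x0, v0) := by
          apply HasFDerivAt.prodMk ?_ hasFDerivAt_fst
          exact (beta n).hasFDerivAt.comp (x0, v0)
            (((hfd v0).hasFDerivAt).comp (x0, v0) hasFDerivAt_snd)
        have := (hbb.hasFDerivAt (beta n J, x0)).comp (x0, v0) hg
        exact this
    -- G = e.symm ∘ H ∘ e
    have hGe : G = fun w => e.symm (H (e w)) := by
      funext w
      rw [hG w]
      funext s
      cases s with
      | inl a => rfl
      | inr b =>
        show _ = (beta n (fderiv ℝ F (w ∘ Sum.inr))) (w ∘ Sum.inl) b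
        rw [beta_apply]
        rfl
    have hDG : HasFDerivAt G
        (((e.symm : ((Fin n → ℝ) × (Fin n → ℝ)) →L[ℝ] ((Fin n ⊕ Fin n) → ℝ))).comp
          (LH.comp (e : ((Fin n ⊕ Fin n) → ℝ) →L[ℝ] ((Fin n → ℝ) × (Fin n → ℝ))))) w0 := by
      rw [hGe]
      have h1 : HasFDerivAt e (e : ((Fin n ⊕ Fin n) → ℝ) →L[ℝ] _) w0 := e.hasFDerivAt
      have h2 : HasFDerivAt H LH (e w0) := by rw [hew0]; exact hH
      have h3 : HasFDerivAt e.symm (e.symm : ((Fin n → ℝ) × (Fin n → ℝ)) →L[ℝ] _) (H (e w0)) :=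
        e.symm.hasFDerivAt
      exact h3.comp w0 (h2.comp w0 h1)
    have hfderiv : fderiv ℝ G w0 =
        ((e.symm : ((Fin n → ℝ) × (Fin n → ℝ)) →L[ℝ] ((Fin n ⊕ Fin n) → ℝ))).comp
          (LH.comp (e : ((Fin n ⊕ Fin n) → ℝ) →L[ℝ] ((Fin n → ℝ) × (Fin n → ℝ)))) := hDG.fderiv
    let Mm : Matrix (Fin n) (Fin n) ℝ :=
      Matrix.of fun i j => (beta n (D2 (Pi.single j (1:ℝ)))) x0 i
    have hsb : ∀ (j : Fin n ⊕ Fin n),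
        (fun j' : Fin n ⊕ Fin n => if j' = j then (1:ℝ) else 0) = Pi.single j (1:ℝ) := by
      intro j; funext k; simp [Pi.single_apply]
    have hsbf : ∀ (j : Fin n),
        (fun j' : Fin n => if j' = j then (1:ℝ) else 0) = Pi.single j (1:ℝ) := by
      intro j; funext k; simp [Pi.single_apply]
    have he1 : ∀ j : Fin n,
        (e : ((Fin n ⊕ Fin n) → ℝ) →L[ℝ] (Fin n → ℝ) × (Fin n → ℝ)) (Pi.single (Sum.inl j : Fin n ⊕ Fin n) (1:ℝ)) = (Pi.single j (1:ℝ), (0 : Fin n → ℝ)) := by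
      intro j
      ext k <;> simp [e, Pi.single_apply]
    have he2 : ∀ j : Fin n,
        (e : ((Fin n ⊕ Fin n) → ℝ) →L[ℝ] (Fin n → ℝ) × (Fin n → ℝ)) (Pi.single (Sum.inr j : Fin n ⊕ Fin n) (1:ℝ)) = ((0 : Fin n → ℝ), Pi.single j (1:ℝ)) := by
      intro j
      ext k <;> simp [e, Pi.single_apply]
    have hs1 : ∀ (p : (Fin n → ℝ) × (Fin n → ℝ)) (i : Fin n),
        (e.symm : ((Fin n → ℝ) × (Fin n → ℝ)) →L[ℝ] ((Fin n ⊕ Fin n) → ℝ)) p (Sum.inl i) = p.1 i := fun _ _ => rfl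
    have hs2 : ∀ (p : (Fin n → ℝ) × (Fin n → ℝ)) (i : Fin n),
        (e.symm : ((Fin n → ℝ) × (Fin n → ℝ)) →L[ℝ] ((Fin n ⊕ Fin n) → ℝ)) p (Sum.inr i) = p.2 i := fun _ _ => rfl
    have hmat : LinearMap.toMatrix'
        ((fderiv ℝ G w0 : ((Fin n ⊕ Fin n) → ℝ) →L[ℝ] ((Fin n ⊕ Fin n) → ℝ)) :
          ((Fin n ⊕ Fin n) → ℝ) →ₗ[ℝ] ((Fin n ⊕ Fin n) → ℝ)) =
        Matrix.fromBlocks 0 (Jmat F v0) (Jmat F v0)ᵀ Mm := by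
      ext i j
      rw [LinearMap.toMatrix'_apply, hfderiv]
      simp only [ContinuousLinearMap.coe_coe, ContinuousLinearMap.comp_apply]
      cases i with
      | inl i =>
        cases j with
        | inl j =>
          rw [he1 j, hs1]
          simp [LH, sndL]
        | inr j =>
          rw [he2 j, hs1]
          simp [LH, sndL, hsbf, hJdef, Jmat, LinearMap.toMatrix'_apply]
      | inr i =>
        cases j with
        | inl j =>
          rw [he1 j, hs2]
          simp [LH, BB, hbb.deriv_apply, beta_apply, fstL, sndL, hsbf, hJdef, Jmat,
            LinearMap.toMatrix'_apply, Matrix.mulVec_single]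
        | inr j =>
          rw [he2 j, hs2]
          simp [LH, BB, hbb.deriv_apply, fstL, sndL, Mm]
    have hdetF : jdet F v0 = (Jmat F v0).det := by
      rw [jdet, ← LinearMap.det_toMatrix']
      rfl
    rw [show jdet G w0 = LinearMap.det
        ((fderiv ℝ G w0 : ((Fin n ⊕ Fin n) → ℝ) →L[ℝ] ((Fin n ⊕ Fin n) → ℝ)) :
          ((Fin n ⊕ Fin n) → ℝ) →ₗ[ℝ] ((Fin n ⊕ Fin n) → ℝ)) from rfl]
    rw [← LinearMap.det_toMatrix', hmat, det_fromBlocks_zero_tl, Matrix.det_transpose,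
      Fintype.card_fin, hdetF]
    ring
  refine ⟨key, fun h w => ?_⟩
  rw [key w]
  exact mul_ne_zero (pow_ne_zero _ (by norm_num)) (pow_ne_zero _ (h _))
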